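/- Let A* be a projective line arrangement in ℙ²(ℂ) containing at least three lines. If A* does not have a decone with a general position partition, then for every graph of Fan type F ∈ 𝓕(A*): F is connected, every edge of F is contained in a simple circuit of F, and every line of A* contains a vertex of F (i.e., a point of multiplicity at least three). -/

import Mathlib

open scoped Classical

/-- The complex projective plane `ℙ²(ℂ)`, the projectivization of `ℂ³`. -/
abbrev P2 : Type := Projectivization ℂ (Fin 3 → ℂ)

/-- A projective line in `ℙ²(ℂ)`: the image of a 2-dimensional linear subspace of `ℂ³`. -/
def IsProjLine (L : Set P2) : Prop :=
  ∃ W : Submodule ℂ (Fin 3 → ℂ), Module.finrank ℂ W = 2 ∧ L = {p : P2 | p.rep ∈ W}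

/-- The multiplicity of a point in an arrangement: the number of lines passing through it. -/
noncomputable def mult (A : Finset (Set P2)) (p : P2) : ℕ :=
  (A.filter (fun L => p ∈ L)).card

/-- `M₃(A)`: the set of points lying on at least three lines of `A`. -/
def M3 (A : Finset (Set P2)) : Set P2 := {p | 3 ≤ mult A p}

/-- `A` has a decone with a general position partition. -/
def HasDeconeGPP (A : Finset (Set P2)) : Prop :=
  ∃ L ∈ A, ∃ C₁ C₂ : Finset (Set P2),
    C₁.Nonempty ∧ C₂.Nonempty ∧ Disjoint C₁ C₂ ∧ C₁ ∪ C₂ = A.erase L ∧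
    ∀ H₁ ∈ C₁, ∀ H₂ ∈ C₂, ∀ p ∈ H₁ ∩ H₂, ∀ K ∈ A, p ∈ K → K = H₁ ∨ K = H₂

/-- `F` is a graph of Fan type for the arrangement `A`: its vertices are the points of
`M₃(A)`, every edge joins two points on a common line of `A`, and for each line `L` the
edges joining points of `M₃(A) ∩ L` are exactly the consecutive pairs of some enumeration
of `M₃(A) ∩ L`. -/
def IsFanGraph (A : Finset (Set P2)) (F : SimpleGraph ↥(M3 A)) : Prop :=
  (∀ v w : ↥(M3 A), F.Adj v w → ∃ L ∈ A, (v : P2) ∈ L ∧ (w : P2) ∈ L) ∧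
  ∀ L ∈ A, (∃ v : ↥(M3 A), (v : P2) ∈ L) →
    ∃ (m : ℕ) (e : Fin m → ↥(M3 A)), Function.Injective e ∧
      (∀ v : ↥(M3 A), (v : P2) ∈ L ↔ ∃ i, e i = v) ∧
      (∀ v w : ↥(M3 A), (v : P2) ∈ L → (w : P2) ∈ L →
        (F.Adj v w ↔ ∃ i j : Fin m, (j : ℕ) = (i : ℕ) + 1 ∧
          ((e i = v ∧ e j = w) ∨ (e i = w ∧ e j = v))))

/- ### Auxiliary lemmas -/

lemma line_unique {L K : Set P2} (hL : IsProjLine L) (hK : IsProjLine K)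
    {p q : P2} (hpq : p ≠ q)
    (hp1 : p ∈ L) (hq1 : q ∈ L) (hp2 : p ∈ K) (hq2 : q ∈ K) : L = K := by
  obtain ⟨W₁, hW₁, rfl⟩ := hL
  obtain ⟨W₂, hW₂, rfl⟩ := hK
  have hind : LinearIndependent ℂ ![p.rep, q.rep] := by
    rw [linearIndependent_fin2]
    refine ⟨by simpa using q.rep_nonzero, ?_⟩
    intro a ha
    simp only [Matrix.cons_val_one, Matrix.head_cons, Matrix.cons_val_zero] at ha
    apply hpq
    have ha0 : a ≠ 0 := by
      rintro rfl
      exact p.rep_nonzero (by simpa using ha.symm)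
    have := (Projectivization.mk_eq_mk_iff' ℂ p.rep q.rep p.rep_nonzero q.rep_nonzero).2 ⟨a, ha⟩
    rw [Projectivization.mk_rep, Projectivization.mk_rep] at this
    exact this
  have hspan : Module.finrank ℂ (Submodule.span ℂ (Set.range ![p.rep, q.rep])) = 2 := by
    rw [finrank_span_eq_card hind]; simp
  have hle1 : Submodule.span ℂ (Set.range ![p.rep, q.rep]) ≤ W₁ := by
    rw [Submodule.span_le]; rintro x ⟨i, rfl⟩
    fin_cases i
    · exact hp1
    · exact hq1
  have hle2 : Submodule.span ℂ (Set.range ![p.rep, q.rep]) ≤ W₂ := by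
    rw [Submodule.span_le]; rintro x ⟨i, rfl⟩
    fin_cases i
    · exact hp2
    · exact hq2
  have e1 := Submodule.eq_of_le_of_finrank_eq hle1 (by rw [hspan, hW₁])
  have e2 := Submodule.eq_of_le_of_finrank_eq hle2 (by rw [hspan, hW₂])
  rw [← e1, ← e2]

lemma mem_M3_of_three (A : Finset (Set P2)) {X Y K : Set P2}
    (hX : X ∈ A) (hY : Y ∈ A) (hK : K ∈ A) (hXY : X ≠ Y) (hKX : K ≠ X) (hKY : K ≠ Y)
    {p : P2} (hpX : p ∈ X) (hpY : p ∈ Y) (hpK : p ∈ K) : p ∈ M3 A := by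
  have hsub : ({X, Y, K} : Finset (Set P2)) ⊆ A.filter (fun L => p ∈ L) := by
    intro Z hZ
    simp only [Finset.mem_insert, Finset.mem_singleton] at hZ
    rcases hZ with rfl | rfl | rfl <;> simp [Finset.mem_filter, hX, hY, hK, hpX, hpY, hpK]
  have hcard : ({X, Y, K} : Finset (Set P2)).card = 3 := by
    rw [Finset.card_insert_of_notMem (by simp [hXY, hKX.symm]),
      Finset.card_insert_of_notMem (by simp [hKY.symm]), Finset.card_singleton]
  show 3 ≤ mult A p
  calc 3 = ({X, Y, K} : Finset (Set P2)).card := hcard.symm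
    _ ≤ _ := Finset.card_le_card hsub

/-- The "bad pair" relation relative to a cone line `L₀`. -/
def RelGood (A : Finset (Set P2)) (L₀ : Set P2) (X Y : Set P2) : Prop :=
  X ∈ A.erase L₀ ∧ Y ∈ A.erase L₀ ∧ ∃ p : P2, p ∈ M3 A ∧ p ∈ X ∧ p ∈ Y

lemma rel_connected (A : Finset (Set P2)) (hngpp : ¬ HasDeconeGPP A)
    {L₀ : Set P2} (hL₀ : L₀ ∈ A) :
    ∀ H ∈ A.erase L₀, ∀ H' ∈ A.erase L₀, Relation.ReflTransGen (RelGood A L₀) H H' := by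
  intro H hH H' hH'
  by_contra hcon
  set C₁ := (A.erase L₀).filter (fun X => Relation.ReflTransGen (RelGood A L₀) H X) with hC₁
  set C₂ := (A.erase L₀).filter (fun X => ¬ Relation.ReflTransGen (RelGood A L₀) H X) with hC₂
  have hne1 : C₁.Nonempty := ⟨H, Finset.mem_filter.2 ⟨hH, Relation.ReflTransGen.refl⟩⟩
  have hne2 : C₂.Nonempty := ⟨H', Finset.mem_filter.2 ⟨hH', hcon⟩⟩
  have hdisj : Disjoint C₁ C₂ := Finset.disjoint_filter_filter_not _ _ _
  have hunion : C₁ ∪ C₂ = A.erase L₀ := Finset.filter_union_filter_not_eq _ _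
  by_cases hP5 : ∀ H₁ ∈ C₁, ∀ H₂ ∈ C₂, ∀ p ∈ H₁ ∩ H₂, ∀ K ∈ A, p ∈ K → K = H₁ ∨ K = H₂
  · exact hngpp ⟨L₀, hL₀, C₁, C₂, hne1, hne2, hdisj, hunion, hP5⟩
  · push_neg at hP5
    obtain ⟨H₁, h₁, H₂, h₂, p, hp, K, hK, hpK, hK1, hK2⟩ := hP5
    have h₁' := Finset.mem_filter.1 h₁
    have h₂' := Finset.mem_filter.1 h₂
    have hH₁A : H₁ ∈ A := Finset.mem_of_mem_erase h₁'.1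
    have hH₂A : H₂ ∈ A := Finset.mem_of_mem_erase h₂'.1
    have hne12 : H₁ ≠ H₂ := by
      rintro rfl
      exact h₂'.2 h₁'.2
    have hpM3 : p ∈ M3 A :=
      mem_M3_of_three A hH₁A hH₂A hK hne12 hK1 hK2 hp.1 hp.2 hpK
    exact h₂'.2 (h₁'.2.tail ⟨h₁'.1, h₂'.1, p, hpM3, hp.1, hp.2⟩)

lemma walk_on_line (A : Finset (Set P2)) (F : SimpleGraph ↥(M3 A)) (hF : IsFanGraph A F)
    {L : Set P2} (hL : L ∈ A) (v w : ↥(M3 A)) (hv : (v : P2) ∈ L) (hw : (w : P2) ∈ L) :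
    ∃ W : F.Walk v w, ∀ x ∈ W.support, (x : P2) ∈ L := by
  obtain ⟨m, e, he_inj, he_mem, he_adj⟩ := hF.2 L hL ⟨v, hv⟩
  have heL : ∀ i : Fin m, (e i : P2) ∈ L := fun i => (he_mem (e i)).2 ⟨i, rfl⟩
  have hadj : ∀ i j : Fin m, (j : ℕ) = (i : ℕ) + 1 → F.Adj (e i) (e j) := by
    intro i j hij
    exact (he_adj (e i) (e j) (heL i) (heL j)).2 ⟨i, j, hij, Or.inl ⟨rfl, rfl⟩⟩
  have key : ∀ d : ℕ, ∀ i j : Fin m, (j : ℕ) = (i : ℕ) + d →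
      ∃ W : F.Walk (e i) (e j), ∀ x ∈ W.support, (x : P2) ∈ L := by
    intro d
    induction d with
    | zero =>
      intro i j h
      have : i = j := Fin.ext (by omega)
      subst this
      exact ⟨SimpleGraph.Walk.nil, by simp [heL]⟩
    | succ d ih =>
      intro i j h
      have hj' : (i : ℕ) + d < m := by have := j.isLt; omega
      obtain ⟨W, hW⟩ := ih i ⟨(i : ℕ) + d, hj'⟩ rfl
      have hadj' : F.Adj (e ⟨(i : ℕ) + d, hj'⟩) (e j) :=
        hadj _ _ (by simp only [Fin.val_mk]; omega)
      refine ⟨W.concat hadj', ?_⟩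
      intro x hx
      rw [SimpleGraph.Walk.support_concat, List.mem_append] at hx
      rcases hx with hx | hx
      · exact hW x hx
      · rw [List.mem_singleton] at hx; subst hx; exact heL j
  obtain ⟨i, rfl⟩ := (he_mem v).1 hv
  obtain ⟨j, rfl⟩ := (he_mem w).1 hw
  rcases le_total (i : ℕ) (j : ℕ) with hij | hij
  · exact key ((j : ℕ) - (i : ℕ)) i j (by omega)
  · obtain ⟨W, hW⟩ := key ((i : ℕ) - (j : ℕ)) j i (by omega)
    refine ⟨W.reverse, ?_⟩
    intro x hx
    rw [SimpleGraph.Walk.support_reverse, List.mem_reverse] at hx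
    exact hW x hx

lemma chain_walk (A : Finset (Set P2)) (F : SimpleGraph ↥(M3 A)) (hF : IsFanGraph A F)
    (L₀ : Set P2) {H H' : Set P2}
    (hchain : Relation.ReflTransGen (RelGood A L₀) H H') (hH : H ∈ A.erase L₀)
    (v w : ↥(M3 A)) (hv : (v : P2) ∈ H) (hw : (w : P2) ∈ H') :
    ∃ W : F.Walk v w, ∀ a b : ↥(M3 A), s(a, b) ∈ W.edges →
      ∃ K ∈ A.erase L₀, (a : P2) ∈ K ∧ (b : P2) ∈ K := by
  induction hchain generalizing w with
  | refl =>
    obtain ⟨W, hW⟩ := walk_on_line A F hF (Finset.mem_of_mem_erase hH) v w hv hw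
    exact ⟨W, fun a b hab => ⟨H, hH, hW a (W.fst_mem_support_of_mem_edges hab),
      hW b (W.snd_mem_support_of_mem_edges hab)⟩⟩
  | tail h1 h2 ih =>
    obtain ⟨hb, hc, p, hpM3, hpb, hpc⟩ := h2
    obtain ⟨W₁, hW₁⟩ := ih (⟨p, hpM3⟩ : ↥(M3 A)) hpb
    obtain ⟨W₂, hW₂⟩ := walk_on_line A F hF (Finset.mem_of_mem_erase hc)
      (⟨p, hpM3⟩ : ↥(M3 A)) w hpc hw
    refine ⟨W₁.append W₂, ?_⟩
    intro a b hab
    rw [SimpleGraph.Walk.edges_append, List.mem_append] at hab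
    rcases hab with hab | hab
    · exact hW₁ a b hab
    · exact ⟨_, hc, hW₂ a (W₂.fst_mem_support_of_mem_edges hab),
        hW₂ b (W₂.snd_mem_support_of_mem_edges hab)⟩

theorem no_gpp_implies_fan_graphs_connected_and_bridgeless
    (A : Finset (Set P2)) (hA : ∀ L ∈ A, IsProjLine L) (hcard : 3 ≤ A.card)
    (hngpp : ¬ HasDeconeGPP A) :
    ∀ F : SimpleGraph ↥(M3 A), IsFanGraph A F →
      F.Connected ∧
      (∀ e ∈ F.edgeSet, ∃ (u : ↥(M3 A)) (cW : F.Walk u u), cW.IsCycle ∧ e ∈ cW.edges) ∧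
      (∀ L ∈ A, ∃ p : ↥(M3 A), (p : P2) ∈ L) := by
  intro F hF
  -- every line contains a vertex
  have hvert : ∀ L ∈ A, ∃ p : ↥(M3 A), (p : P2) ∈ L := by
    intro L hL
    obtain ⟨L', hL', hL'ne⟩ := Finset.exists_mem_ne (s := A) (by omega) L
    have hLe : L ∈ A.erase L' := Finset.mem_erase.2 ⟨hL'ne.symm, hL⟩
    have hcard' : 1 < (A.erase L').card := by
      rw [Finset.card_erase_of_mem hL']; omega
    obtain ⟨H, hHe, hHne⟩ := Finset.exists_mem_ne hcard' L
    have hrtg := rel_connected A hngpp hL' L hLe H hHe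
    rcases hrtg.cases_head with rfl | ⟨c, hstep, _⟩
    · exact absurd rfl hHne
    · obtain ⟨_, _, p, hpM3, hpL, _⟩ := hstep
      exact ⟨⟨p, hpM3⟩, hpL⟩
  -- the main walk-construction tool
  have reach : ∀ L₀ ∈ A, ∀ H ∈ A.erase L₀, ∀ H' ∈ A.erase L₀,
      ∀ v w : ↥(M3 A), (v : P2) ∈ H → (w : P2) ∈ H' →
      ∃ W : F.Walk v w, ∀ a b : ↥(M3 A), s(a, b) ∈ W.edges →
        ∃ K ∈ A.erase L₀, (a : P2) ∈ K ∧ (b : P2) ∈ K := by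
    intro L₀ hL₀ H hH H' hH' v w hv hw
    exact chain_walk A F hF L₀ (rel_connected A hngpp hL₀ H hH H' hH') hH v w hv hw
  -- every vertex lies on some line, with a chosen exception
  have hline : ∀ (v : ↥(M3 A)) (L : Set P2), ∃ H ∈ A, H ≠ L ∧ (v : P2) ∈ H := by
    intro v L
    have hv3 : 3 ≤ (A.filter (fun K => (v : P2) ∈ K)).card := v.2
    obtain ⟨H, hH, hHne⟩ :=
      Finset.exists_mem_ne (s := A.filter (fun K => (v : P2) ∈ K)) (by omega) L
    have := Finset.mem_filter.1 hH
    exact ⟨H, this.1, hHne, this.2⟩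
  refine ⟨?_, ?_, hvert⟩
  · -- connectivity
    rw [SimpleGraph.connected_iff]
    constructor
    · intro v w
      obtain ⟨H, hHA, _, hvH⟩ := hline v ∅
      obtain ⟨H', hH'A, _, hwH'⟩ := hline w ∅
      -- pick a cone line distinct from H and H'
      have hsd : 0 < (A \ {H, H'}).card := by
        have h1 : A.card ≤ (A \ ({H, H'} : Finset (Set P2))).card + ({H, H'} : Finset (Set P2)).card := by
          rw [Finset.card_sdiff_add_card]
          exact Finset.card_le_card Finset.subset_union_left
        have h2 : ({H, H'} : Finset (Set P2)).card ≤ 2 := by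
          apply le_trans (Finset.card_insert_le _ _); simp
        omega
      obtain ⟨L₀, hL₀⟩ := Finset.card_pos.1 hsd
      rw [Finset.mem_sdiff] at hL₀
      have hL₀A := hL₀.1
      have hHne : H ≠ L₀ := by intro h; exact hL₀.2 (by simp [h])
      have hH'ne : H' ≠ L₀ := by intro h; exact hL₀.2 (by simp [h])
      obtain ⟨W, _⟩ := reach L₀ hL₀A H (Finset.mem_erase.2 ⟨hHne, hHA⟩)
        H' (Finset.mem_erase.2 ⟨hH'ne, hH'A⟩) v w hvH hwH'
      exact ⟨W⟩
    · obtain ⟨L, hL⟩ := Finset.card_pos.1 (by omega : 0 < A.card)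
      obtain ⟨p, _⟩ := hvert L hL
      exact ⟨p⟩
  · -- every edge lies on a cycle
    intro e he
    induction e with
    | h v w =>
      rw [SimpleGraph.mem_edgeSet] at he
      obtain ⟨L, hLA, hvL, hwL⟩ := hF.1 v w he
      have hvw : (v : P2) ≠ (w : P2) := Subtype.coe_injective.ne he.ne
      obtain ⟨H, hHA, hHne, hvH⟩ := hline v L
      obtain ⟨H', hH'A, hH'ne, hwH'⟩ := hline w L
      -- walk from w to v avoiding line L
      obtain ⟨W, hW⟩ := reach L hLA H' (Finset.mem_erase.2 ⟨hH'ne, hH'A⟩)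
        H (Finset.mem_erase.2 ⟨hHne, hHA⟩) w v hwH' hvH
      have hnot : s(v, w) ∉ W.edges := by
        intro h
        obtain ⟨K, hK, hvK, hwK⟩ := hW v w h
        rw [Finset.mem_erase] at hK
        exact hK.1 (line_unique (hA K hK.2) (hA L hLA) hvw hvK hwK hvL hwL)
      set P := W.toPath with hP
      have hnp : s(v, w) ∉ (P : F.Walk w v).edges := fun h =>
        hnot (SimpleGraph.Walk.edges_toPath_subset W h)
      have hcyc := P.cons_isCycle he hnp
      refine ⟨v, SimpleGraph.Walk.cons he (P : F.Walk w v), hcyc, ?_⟩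
      rw [SimpleGraph.Walk.edges_cons]
      exact List.mem_cons_self
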